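/- Let a k-HDM instance be given, let S₀ ∈ 𝓔, let x be a fractional solution, and let x̄ : 𝓔 → ℝ agree with x on 𝓔 ∖ {S₀} and satisfy x̄_{S₀} = 0. Let α ∈ (0,1], and suppose α·x̄ = Σ_{i ∈ I} μ_i χ^i is a convex combination (I finite, μ_i ≥ 0, Σ_{i ∈ I} μ_i = 1) of the indicator vectors χ^i of integral solutions M_i with S₀ ∉ M_i. For u ∈ S₀ let β_u := Σ { μ_i : i ∈ I such that Σ_{T ∈ M_i : u ∈ T} d_T > b_u − d_{S₀} } (the fraction of the solutions in which S₀ is blocked at u). If 1 − Σ_{u ∈ S₀} β_u ≥ α·x_{S₀}, then α·x lies in the convex hull of the indicator vectors of integral solutions of the instance. -/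

import Mathlib

open Finset

/-- **Packing an edge back (Lemma 1).** If `α·x̄` (where `x̄` is `x` with the
coordinate of `S₀` zeroed out) has a convex decomposition into indicator vectors of
integral solutions avoiding `S₀`, and `1 − Σ_{u ∈ S₀} β_u ≥ α·x_{S₀}` where `β_u` is
the fraction of the solutions in which `S₀` is blocked at `u`, then `α·x` lies in the
convex hull of the indicator vectors of integral solutions. -/
theorem kHDM_pack_edge
    {V : Type*} [Fintype V] [DecidableEq V]
    (k : ℕ) (hk : 1 ≤ k)
    (𝓔 : Finset (Finset V))
    (d : Finset V → ℤ) (b : V → ℤ)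
    (hcard : ∀ S ∈ 𝓔, 1 ≤ S.card ∧ S.card ≤ k)
    (hd : ∀ S ∈ 𝓔, 1 ≤ d S)
    (hb : ∀ v : V, 1 ≤ b v)
    (hnoclip : ∀ S ∈ 𝓔, ∀ v ∈ S, d S ≤ b v)
    (S₀ : {S : Finset V // S ∈ 𝓔})
    (x : {S : Finset V // S ∈ 𝓔} → ℝ)
    (hx0 : ∀ S, 0 ≤ x S) (hx1 : ∀ S, x S ≤ 1)
    (hxcap : ∀ v : V,
      ∑ S : {S : Finset V // S ∈ 𝓔}, (if v ∈ S.1 then (d S.1 : ℝ) * x S else 0) ≤ (b v : ℝ))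
    (xbar : {S : Finset V // S ∈ 𝓔} → ℝ)
    (hxbar : ∀ S, S ≠ S₀ → xbar S = x S) (hxbar0 : xbar S₀ = 0)
    (α : ℝ) (hα0 : 0 < α) (hα1 : α ≤ 1)
    {ι : Type*} (I : Finset ι) (μ : ι → ℝ) (M : ι → Finset (Finset V))
    (hM𝓔 : ∀ i ∈ I, M i ⊆ 𝓔)
    (hMfeas : ∀ i ∈ I, ∀ v : V, ∑ T ∈ (M i).filter (fun T => v ∈ T), d T ≤ b v)
    (hMS₀ : ∀ i ∈ I, S₀.1 ∉ M i)
    (hμ0 : ∀ i ∈ I, 0 ≤ μ i) (hμ1 : ∑ i ∈ I, μ i = 1)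
    (hdecomp : ∀ S, α * xbar S = ∑ i ∈ I, μ i * (if S.1 ∈ M i then 1 else 0))
    (hpack : α * x S₀ ≤ 1 - ∑ u ∈ S₀.1,
      ∑ i ∈ I.filter (fun i => b u - d S₀.1 < ∑ T ∈ (M i).filter (fun T => u ∈ T), d T), μ i) :
    (fun S => α * x S) ∈
      convexHull ℝ {χ : {S : Finset V // S ∈ 𝓔} → ℝ |
        ∃ N : Finset (Finset V), N ⊆ 𝓔 ∧
          (∀ v : V, ∑ S ∈ N.filter (fun S => v ∈ S), d S ≤ b v) ∧
          χ = fun S => if S.1 ∈ N then 1 else 0} := by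
  classical
  set t : ℝ := α * x S₀ with ht_def
  have ht0 : 0 ≤ t := mul_nonneg hα0.le (hx0 S₀)
  set Good : ι → Prop :=
    fun i => ∀ u ∈ S₀.1, ∑ T ∈ (M i).filter (fun T => u ∈ T), d T ≤ b u - d S₀.1 with hGood_def
  set G : ℝ := ∑ i ∈ I.filter (fun i => Good i), μ i with hG_def
  have hG0 : 0 ≤ G :=
    Finset.sum_nonneg fun i hi => hμ0 i (Finset.mem_filter.mp hi).1
  -- union bound on the bad mass
  have hbad : ∑ i ∈ I.filter (fun i => ¬ Good i), μ i ≤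
      ∑ u ∈ S₀.1, ∑ i ∈ I.filter
        (fun i => b u - d S₀.1 < ∑ T ∈ (M i).filter (fun T => u ∈ T), d T), μ i := by
    have step1 : ∑ i ∈ I.filter (fun i => ¬ Good i), μ i ≤
        ∑ i ∈ I.filter (fun i => ¬ Good i), ∑ u ∈ S₀.1,
          (if b u - d S₀.1 < ∑ T ∈ (M i).filter (fun T => u ∈ T), d T then μ i else 0) := by
      apply Finset.sum_le_sum
      intro i hi
      obtain ⟨hiI, hbadi⟩ := Finset.mem_filter.mp hi
      have hb' : ¬ ∀ u ∈ S₀.1, ∑ T ∈ (M i).filter (fun T => u ∈ T), d T ≤ b u - d S₀.1 := hbadi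
      push_neg at hb'
      obtain ⟨u, hu, hlt⟩ := hb'
      have h1 := Finset.single_le_sum
        (f := fun u => if b u - d S₀.1 < ∑ T ∈ (M i).filter (fun T => u ∈ T), d T
          then μ i else 0)
        (fun u _ => by split_ifs <;> [exact hμ0 i hiI; exact le_rfl]) hu
      simpa [if_pos hlt] using h1
    have step2 : ∑ i ∈ I.filter (fun i => ¬ Good i), ∑ u ∈ S₀.1,
          (if b u - d S₀.1 < ∑ T ∈ (M i).filter (fun T => u ∈ T), d T then μ i else 0)
        = ∑ u ∈ S₀.1, ∑ i ∈ I.filter (fun i => ¬ Good i),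
          (if b u - d S₀.1 < ∑ T ∈ (M i).filter (fun T => u ∈ T), d T then μ i else 0) :=
      Finset.sum_comm
    have step3 : ∀ u ∈ S₀.1, ∑ i ∈ I.filter (fun i => ¬ Good i),
          (if b u - d S₀.1 < ∑ T ∈ (M i).filter (fun T => u ∈ T), d T then μ i else 0)
        ≤ ∑ i ∈ I.filter
          (fun i => b u - d S₀.1 < ∑ T ∈ (M i).filter (fun T => u ∈ T), d T), μ i := by
      intro u _
      rw [← Finset.sum_filter]
      apply Finset.sum_le_sum_of_subset_of_nonneg
      · intro i hi
        rw [Finset.mem_filter] at hi ⊢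
        exact ⟨(Finset.mem_filter.mp hi.1).1, hi.2⟩
      · intro i hi _
        exact hμ0 i (Finset.mem_filter.mp hi).1
    calc ∑ i ∈ I.filter (fun i => ¬ Good i), μ i ≤ _ := step1
      _ = _ := step2
      _ ≤ _ := Finset.sum_le_sum step3
  have hsplit : G + ∑ i ∈ I.filter (fun i => ¬ Good i), μ i = 1 := by
    rw [hG_def, Finset.sum_filter_add_sum_filter_not, hμ1]
  have htG : t ≤ G := by linarith
  -- the splitting ratio
  set c : ℝ := t / G with hc_def
  have hc0 : 0 ≤ c := div_nonneg ht0 hG0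
  have hc1 : c ≤ 1 := by
    rcases eq_or_lt_of_le hG0 with hG | hG
    · have : t = 0 := le_antisymm (by rw [hG]; exact htG) ht0
      simp [hc_def, this]
    · exact div_le_one_of_le₀ htG hG0
  have hGc : G * c = t := by
    rcases eq_or_lt_of_le hG0 with hG | hG
    · have ht : t = 0 := le_antisymm (by rw [hG]; exact htG) ht0
      simp [← hG, ht]
    · rw [hc_def, mul_div_assoc']; exact mul_div_cancel_left₀ t hG.ne'
  set ν : ι → ℝ := fun i => if Good i then μ i * c else 0 with hν_def
  have hν0 : ∀ i ∈ I, 0 ≤ ν i := by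
    intro i hi
    simp only [hν_def]
    split_ifs
    · exact mul_nonneg (hμ0 i hi) hc0
    · exact le_rfl
  have hνμ : ∀ i ∈ I, ν i ≤ μ i := by
    intro i hi
    simp only [hν_def]
    split_ifs
    · calc μ i * c ≤ μ i * 1 := mul_le_mul_of_nonneg_left hc1 (hμ0 i hi)
        _ = μ i := mul_one _
    · exact hμ0 i hi
  have hνsum : ∑ i ∈ I, ν i = t := by
    have h1 : ∑ i ∈ I, ν i = ∑ i ∈ I.filter (fun i => Good i), μ i * c :=
      (Finset.sum_filter _ _).symm
    rw [h1, ← Finset.sum_mul, ← hG_def, hGc]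
  -- the two copies of each solution: without and with `S₀` packed in
  set N : ι × Bool → Finset (Finset V) :=
    fun p => if p.2 = true ∧ Good p.1 then insert S₀.1 (M p.1) else M p.1 with hN_def
  set w : ι × Bool → ℝ := fun p => if p.2 then ν p.1 else μ p.1 - ν p.1 with hw_def
  set z : ι × Bool → ({S : Finset V // S ∈ 𝓔} → ℝ) :=
    fun p => fun S => if S.1 ∈ N p then 1 else 0 with hz_def
  set J : Finset (ι × Bool) := I ×ˢ (Finset.univ : Finset Bool) with hJ_def
  have hw0 : ∀ p ∈ J, 0 ≤ w p := by
    rintro ⟨i, bo⟩ hp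
    have hi : i ∈ I := (Finset.mem_product.mp hp).1
    cases bo
    · simpa [hw_def] using sub_nonneg.mpr (hνμ i hi)
    · simpa [hw_def] using hν0 i hi
  have hwsum : ∑ p ∈ J, w p = 1 := by
    rw [hJ_def, Finset.sum_product]
    have h2 : ∀ i ∈ I, ∑ bo : Bool, w (i, bo) = μ i := by
      intro i hi
      rw [Fintype.sum_bool]
      simp [hw_def]
    rw [Finset.sum_congr rfl h2, hμ1]
  have hz : ∀ p ∈ J, z p ∈ {χ : {S : Finset V // S ∈ 𝓔} → ℝ |
        ∃ N : Finset (Finset V), N ⊆ 𝓔 ∧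
          (∀ v : V, ∑ S ∈ N.filter (fun S => v ∈ S), d S ≤ b v) ∧
          χ = fun S => if S.1 ∈ N then 1 else 0} := by
    rintro ⟨i, bo⟩ hp
    have hi : i ∈ I := (Finset.mem_product.mp hp).1
    refine ⟨N (i, bo), ?_, ?_, rfl⟩
    · by_cases h : bo = true ∧ Good i
      · simp only [hN_def, if_pos h]
        exact Finset.insert_subset S₀.2 (hM𝓔 i hi)
      · simp only [hN_def, if_neg h]
        exact hM𝓔 i hi
    · intro v
      by_cases h : bo = true ∧ Good i
      · simp only [hN_def, if_pos h]
        have hns : S₀.1 ∉ M i := hMS₀ i hi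
        by_cases hv : v ∈ S₀.1
        · rw [Finset.filter_insert, if_pos hv,
            Finset.sum_insert (by simp [Finset.mem_filter, hns])]
          have h3 := h.2 v hv
          linarith
        · rw [Finset.filter_insert, if_neg hv]
          exact hMfeas i hi v
      · simp only [hN_def, if_neg h]
        exact hMfeas i hi v
  have key : (fun S : {S : Finset V // S ∈ 𝓔} => α * x S) = ∑ p ∈ J, w p • z p := by
    funext S
    rw [Finset.sum_apply]
    simp only [Pi.smul_apply, smul_eq_mul]
    rw [hJ_def, Finset.sum_product]
    by_cases hS : S = S₀
    · have hterm : ∀ i ∈ I, ∑ bo : Bool, w (i, bo) * z (i, bo) S = ν i := by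
        intro i hi
        have h0 : z (i, false) S = 0 := by
          simp [hz_def, hN_def, hS, hMS₀ i hi]
        have h1 : w (i, true) * z (i, true) S = ν i := by
          by_cases hg : Good i
          · have hN1 : N (i, true) = insert S₀.1 (M i) := by
              rw [hN_def]
              exact if_pos ⟨rfl, hg⟩
            have hzv : z (i, true) S = 1 := by
              rw [hz_def]
              simp [hN1, hS]
            have hwv : w (i, true) = ν i := by
              simp [hw_def]
            rw [hzv, hwv, mul_one]
          · have hN1 : N (i, true) = M i := by
              rw [hN_def]
              exact if_neg (by simp [hg])
            have hzv : z (i, true) S = 0 := by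
              rw [hz_def]
              simp [hN1, hS, hMS₀ i hi]
            have hνz : ν i = 0 := by
              rw [hν_def]
              simp [hg]
            rw [hzv, mul_zero, hνz]
        rw [Fintype.sum_bool, h1, h0, mul_zero, add_zero]
      rw [Finset.sum_congr rfl hterm, hνsum, ht_def, hS]
    · have hS1 : S.1 ≠ S₀.1 := fun h => hS (Subtype.ext h)
      have hterm : ∀ i ∈ I, ∑ bo : Bool, w (i, bo) * z (i, bo) S
          = μ i * (if S.1 ∈ M i then 1 else 0) := by
        intro i hi
        have hmem : ∀ bo, z (i, bo) S = (if S.1 ∈ M i then (1 : ℝ) else 0) := by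
          intro bo
          simp only [hz_def, hN_def]
          by_cases h : bo = true ∧ Good i
          · rw [if_pos h]
            simp [Finset.mem_insert, hS1]
          · rw [if_neg h]
        rw [Fintype.sum_bool, hmem true, hmem false]
        simp only [hw_def, if_pos, if_neg, Bool.false_eq_true, ite_true, ite_false]
        ring
      rw [Finset.sum_congr rfl hterm, ← hdecomp S, hxbar S hS]
  have hws : (0 : ℝ) < ∑ p ∈ J, w p := by rw [hwsum]; norm_num
  have hmem := J.centerMass_mem_convexHull hw0 hws hz
  rwa [Finset.centerMass_eq_of_sum_1 _ _ hwsum, ← key] at hmem
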